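/- For every ε > 0 there is a constant C(ε) such that for all n, m with m ≥ (1+ε)n, if 2n independent uniformly random values h_1(x_1),h_2(x_1),...,h_1(x_n),h_2(x_n) in [m] define a bipartite multigraph G on vertex set [m] ⊔ [m] with edges {(h_1(x_i), h_2(x_i))}, then the expected number of subgraphs of G that form a minimal obstruction graph (a cycle with a chord, or two cycles joined by a path of length ≥ 0) is at most C(ε)/m. -/

import Mathlib

/-!
Multigraphs are modeled by a map `ends : E → Sym2 V` assigning to each edge its
pair of endpoints.  Subgraphs are given by subsets `F : Finset E` of edges
(together with their incident vertices; isolated vertices are disregarded).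
-/

open Finset

variable {V E : Type*}

-- Vertices incident to at least one edge of `F` (isolated vertices disregarded).
open Classical in
noncomputable def vertsOf [Fintype V] (ends : E → Sym2 V) (F : Finset E) : Finset V :=
  Finset.univ.filter fun v => ∃ e ∈ F, v ∈ ends e

-- Degree of `v` in the multigraph with edge set `F` (loops count twice).
open Classical in
noncomputable def degIn (ends : E → Sym2 V) (F : Finset E) (v : V) : ℕ :=
  2 * (F.filter fun e => ends e = s(v, v)).card +
    (F.filter fun e => v ∈ ends e ∧ ends e ≠ s(v, v)).card

/-- Adjacency via an edge of `F`. -/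
def adjIn (ends : E → Sym2 V) (F : Finset E) (v w : V) : Prop :=
  ∃ e ∈ F, ends e = s(v, w)

/-- The multigraph with edge set `F` is connected (on its non-isolated vertices). -/
def connIn [Fintype V] (ends : E → Sym2 V) (F : Finset E) : Prop :=
  ∀ v ∈ vertsOf ends F, ∀ w ∈ vertsOf ends F, Relation.ReflTransGen (adjIn ends F) v w

/-- The bipartite multigraph on `[m] ⊔ [m]` whose edge for key `x ∈ T` joins the
left copy of `a(x).1` to the right copy of `a(x).2`. -/
def bipEnds {n m : ℕ} (T : Finset (Fin n)) (a : {x // x ∈ T} → Fin m × Fin m) :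
    {x // x ∈ T} → Sym2 (Fin m ⊕ Fin m) :=
  fun x => s(Sum.inl (a x).1, Sum.inr (a x).2)

/-- A minimal obstruction graph: a connected multigraph of minimum degree ≥ 2
with exactly one more edge than vertices; equivalently (for bipartite
multigraphs) a cycle with a chord or two edge-disjoint cycles joined by a
(possibly empty) simple path. -/
def isMOG {n m : ℕ} (T : Finset (Fin n)) (a : {x // x ∈ T} → Fin m × Fin m) : Prop :=
  connIn (bipEnds T a) Finset.univ ∧
  (∀ v ∈ vertsOf (bipEnds T a) Finset.univ, 2 ≤ degIn (bipEnds T a) Finset.univ v) ∧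
  T.card = (vertsOf (bipEnds T a) Finset.univ).card + 1

-- The expected number of subgraphs of `G(S, h₁, h₂)` forming minimal obstruction
-- graphs, with all `2n` hash values independent and uniform on `[m]`: each
-- labeled candidate subgraph on key set `T` is realized with probability
-- `m^{-2|T|}`.
open Classical in
noncomputable def expMOG (n m : ℕ) : ℝ :=
  ∑ T : Finset (Fin n), ∑ a : {x // x ∈ T} → Fin m × Fin m,
    if isMOG T a then (1 / (m : ℝ)) ^ (2 * T.card) else 0

set_option linter.unusedSectionVars false

variable {V E : Type*}
section Walks

variable (ends : E → Sym2 V)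

def IsWalk : V → List E → V → Prop
  | u, [], v => u = v
  | u, e :: l, v => ∃ x, ends e = s(u, x) ∧ IsWalk x l v

variable {ends}

@[simp] lemma isWalk_nil {u v : V} : IsWalk ends u [] v ↔ u = v := Iff.rfl

@[simp] lemma isWalk_cons {u v : V} {e : E} {l : List E} :
    IsWalk ends u (e :: l) v ↔ ∃ x, ends e = s(u, x) ∧ IsWalk ends x l v := Iff.rfl

lemma IsWalk.append {u v w : V} {l1 l2 : List E}
    (h1 : IsWalk ends u l1 v) (h2 : IsWalk ends v l2 w) : IsWalk ends u (l1 ++ l2) w := by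
  induction l1 generalizing u with
  | nil =>
    rw [isWalk_nil] at h1; subst h1; simpa using h2
  | cons e l ih =>
    obtain ⟨x, hx, hw⟩ := h1
    exact ⟨x, hx, ih hw⟩

lemma IsWalk.split {u v y : V} {l : List E} (h : IsWalk ends u l v) {e : E}
    (he : e ∈ l) (hy : y ∈ ends e) :
    ∃ l1 l2, l = l1 ++ l2 ∧ IsWalk ends u l1 y ∧ IsWalk ends y l2 v := by
  induction l generalizing u with
  | nil => simp at he
  | cons f l ih =>
    obtain ⟨x, hx, hw⟩ := h
    rcases List.mem_cons.1 he with he' | he'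
    · subst he'
      rw [hx, Sym2.mem_iff] at hy
      rcases hy with rfl | rfl
      · exact ⟨[], e :: l, rfl, rfl, ⟨x, hx, hw⟩⟩
      · exact ⟨[e], l, rfl, ⟨y, hx, rfl⟩, hw⟩
    · obtain ⟨l1, l2, rfl, h1, h2⟩ := ih hw he'
      exact ⟨f :: l1, l2, rfl, ⟨x, hx, h1⟩, h2⟩

end Walks

section Degrees

variable {ends : E → Sym2 V} [DecidableEq E]

lemma degIn_union {F G : Finset E} (h : Disjoint F G) (v : V) :
    degIn ends (F ∪ G) v = degIn ends F v + degIn ends G v := by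
  classical
  unfold degIn
  rw [filter_union, filter_union,
    card_union_of_disjoint (h.mono (filter_subset _ _) (filter_subset _ _)),
    card_union_of_disjoint (h.mono (filter_subset _ _) (filter_subset _ _))]
  ring

lemma degIn_empty (v : V) : degIn ends (∅ : Finset E) v = 0 := by
  simp [degIn]

open Classical in
lemma degIn_singleton (e : E) (x : V) :
    degIn ends {e} x = if ends e = s(x,x) then 2 else if x ∈ ends e then 1 else 0 := by
  classical
  unfold degIn
  by_cases h1 : ends e = s(x,x)
  · have hx : x ∈ ends e := by rw [h1]; simp
    rw [if_pos h1, filter_singleton, if_pos h1, filter_singleton]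
    have : ¬ (x ∈ ends e ∧ ends e ≠ s(x,x)) := by simp [h1]
    rw [if_neg this]
    simp
  · rw [if_neg h1, filter_singleton, if_neg h1, filter_singleton]
    by_cases h2 : x ∈ ends e
    · have : (x ∈ ends e ∧ ends e ≠ s(x,x)) := ⟨h2, h1⟩
      rw [if_pos this, if_pos h2]
      simp
    · have : ¬ (x ∈ ends e ∧ ends e ≠ s(x,x)) := fun hc => h2 hc.1
      rw [if_neg this, if_neg h2]
      simp

open Classical in
lemma zmod2_degIn_singleton (e : E) (x : V) :
    (degIn ends {e} x : ZMod 2) = if x ∈ ends e ∧ ends e ≠ s(x,x) then 1 else 0 := by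
  classical
  rw [degIn_singleton]
  by_cases h1 : ends e = s(x,x)
  · have hx : x ∈ ends e := by rw [h1]; simp
    rw [if_pos h1, if_neg (by simp [h1])]
    decide
  · by_cases h2 : x ∈ ends e
    · rw [if_neg h1, if_pos h2, if_pos ⟨h2, h1⟩]
      simp
    · rw [if_neg h1, if_neg h2, if_neg (fun hc => h2 hc.1)]
      simp

lemma degIn_pos_iff {F : Finset E} {x : V} :
    0 < degIn ends F x ↔ ∃ e ∈ F, x ∈ ends e := by
  classical
  constructor
  · intro h
    by_contra hc
    push_neg at hc
    have h1 : (F.filter fun e => ends e = s(x, x)) = ∅ := by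
      refine filter_eq_empty_iff.2 fun {e} he hee => hc e he ?_
      rw [hee]; simp
    have h2 : (F.filter fun e => x ∈ ends e ∧ ends e ≠ s(x, x)) = ∅ :=
      filter_eq_empty_iff.2 fun {e} he hee => hc e he hee.1
    unfold degIn at h
    rw [h1, h2] at h
    simp at h
  · rintro ⟨e, he, hx⟩
    unfold degIn
    by_cases hl : ends e = s(x,x)
    · have h1 : e ∈ F.filter fun e => ends e = s(x, x) := mem_filter.2 ⟨he, hl⟩
      have h2 := card_pos.2 ⟨e, h1⟩
      omega
    · have h1 : e ∈ F.filter fun e => x ∈ ends e ∧ ends e ≠ s(x, x) :=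
        mem_filter.2 ⟨he, hx, hl⟩
      have h2 := card_pos.2 ⟨e, h1⟩
      omega

lemma degIn_eq_zero {F : Finset E} {x : V} (h : ∀ e ∈ F, x ∉ ends e) :
    degIn ends F x = 0 := by
  by_contra hc
  obtain ⟨e, he, hx⟩ := degIn_pos_iff.1 (Nat.pos_of_ne_zero hc)
  exact h e he hx

open Classical in
lemma walk_degree_parity {u v : V} {l : List E}
    (h : IsWalk ends u l v) (hn : l.Nodup) (x : V) :
    (degIn ends l.toFinset x : ZMod 2)
      = (if x = u then 1 else 0) + (if x = v then 1 else 0) := by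
  induction l generalizing u with
  | nil =>
    rw [isWalk_nil] at h; subst h
    rw [List.toFinset_nil, degIn_empty]
    by_cases hx : x = u
    · rw [if_pos hx]; decide
    · rw [if_neg hx]; decide
  | cons e l ih =>
    obtain ⟨y, hy, hw⟩ := h
    have hnd := List.nodup_cons.1 hn
    have hdisj : Disjoint ({e} : Finset E) l.toFinset := by
      simp [Finset.disjoint_singleton_left, hnd.1]
    have hto : (e :: l).toFinset = {e} ∪ l.toFinset := by
      rw [List.toFinset_cons, Finset.insert_eq]
    rw [hto, degIn_union hdisj, Nat.cast_add, zmod2_degIn_singleton, ih hw hnd.2, hy]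
    have key : (if x ∈ s(u, y) ∧ s(u, y) ≠ s(x, x) then (1 : ZMod 2) else 0)
        + (if x = y then 1 else 0) = (if x = u then 1 else 0) := by
      by_cases huy : u = y
      · subst huy
        have hni : ¬ (x ∈ s(u,u) ∧ s(u,u) ≠ s(x,x)) := by
          rintro ⟨hm, hne⟩
          rw [Sym2.mem_iff] at hm
          rcases hm with rfl | rfl <;> exact hne rfl
        rw [if_neg hni]
        by_cases hxu : x = u
        · rw [if_pos hxu]; decide
        · rw [if_neg hxu]; decide
      · by_cases hxu : x = u
        · subst hxu
          have h1 : x ∈ s(x, y) := by simp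
          have h2' : s(x, y) ≠ s(x, x) := by
            intro hc; exact huy (Sym2.congr_right.1 hc).symm
          have hxy : ¬ x = y := fun hc => huy hc
          rw [if_pos ⟨h1, h2'⟩, if_neg hxy, if_pos rfl]
          decide
        · by_cases hxy : x = y
          · subst hxy
            have h1 : x ∈ s(u, x) := by simp
            have h2 : s(u, x) ≠ s(x, x) := by
              intro hc
              rcases Sym2.eq_iff.1 hc with ⟨ha, _⟩ | ⟨ha, _⟩ <;> exact hxu ha.symm
            rw [if_pos ⟨h1, h2⟩, if_pos rfl, if_neg hxu]
            decide
          · have hni : ¬ (x ∈ s(u,y) ∧ s(u,y) ≠ s(x,x)) := by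
              rintro ⟨hm, _⟩
              rw [Sym2.mem_iff] at hm
              rcases hm with rfl | rfl
              · exact hxu rfl
              · exact hxy rfl
            rw [if_neg hni, if_neg hxu, if_neg hxy]
            decide
    rw [← add_assoc, key]

end Degrees

section Handshake

variable {ends : E → Sym2 V}

open Classical in
lemma sum_degIn_singleton [Fintype V] (e : E) : ∑ x : V, degIn ends {e} x = 2 := by
  classical
  obtain ⟨⟨a, b⟩, hab⟩ := Quot.exists_rep (ends e)
  have hab' : ends e = s(a, b) := hab.symm
  by_cases h : a = b
  · subst h
    have : ∀ x : V, degIn ends {e} x = if x = a then 2 else 0 := by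
      intro x
      rw [degIn_singleton, hab']
      by_cases hx : x = a
      · subst hx
        rw [if_pos rfl, if_pos rfl]
      · have h1 : ¬ s(a,a) = s(x,x) := by
          intro hc
          rcases Sym2.eq_iff.1 hc with ⟨h1, _⟩ | ⟨h1, _⟩ <;> exact hx h1.symm
        have h2 : x ∉ s(a,a) := by
          rw [Sym2.mem_iff]; rintro (rfl | rfl) <;> exact hx rfl
        rw [if_neg h1, if_neg h2, if_neg hx]
    rw [Finset.sum_congr rfl fun x _ => this x, Finset.sum_ite_eq' Finset.univ a fun _ => 2,
      if_pos (Finset.mem_univ a)]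
  · have : ∀ x : V, degIn ends {e} x
        = (if x = a then 1 else 0) + (if x = b then 1 else 0) := by
      intro x
      rw [degIn_singleton, hab']
      have h1 : ¬ s(a,b) = s(x,x) := by
        intro hc
        rcases Sym2.eq_iff.1 hc with ⟨ha2, hb2⟩ | ⟨ha2, hb2⟩ <;> exact h (ha2.trans hb2.symm)
      rw [if_neg h1]
      by_cases hx : x = a
      · subst hx
        rw [if_pos (by simp), if_pos rfl, if_neg (fun hc => h hc)]
      · by_cases hxb : x = b
        · subst hxb
          rw [if_pos (by simp), if_neg hx, if_pos rfl]
        · have h2 : x ∉ s(a,b) := by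
            rw [Sym2.mem_iff]; rintro (rfl | rfl); exact hx rfl; exact hxb rfl
          rw [if_neg h2, if_neg hx, if_neg hxb]
    rw [Finset.sum_congr rfl fun x _ => this x, Finset.sum_add_distrib,
      Finset.sum_ite_eq' Finset.univ a fun _ => 1, Finset.sum_ite_eq' Finset.univ b fun _ => 1,
      if_pos (Finset.mem_univ a), if_pos (Finset.mem_univ b)]

lemma sum_degIn [Fintype V] [DecidableEq E] (F : Finset E) :
    ∑ x : V, degIn ends F x = 2 * F.card := by
  classical
  induction F using Finset.induction_on with
  | empty => simp [degIn_empty]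
  | insert e F he ih =>
    have : ∀ x : V, degIn ends (insert e F) x = degIn ends {e} x + degIn ends F x := by
      intro x
      rw [Finset.insert_eq, degIn_union (by simp [he])]
    rw [Finset.sum_congr rfl fun x _ => this x, Finset.sum_add_distrib, sum_degIn_singleton, ih,
      Finset.card_insert_of_notMem he]
    ring

end Handshake

section Trails

variable {ends : E → Sym2 V} [DecidableEq E]

open Classical in
lemma mem_vertsOf [Fintype V] {F : Finset E} {x : V} :
    x ∈ vertsOf ends F ↔ ∃ e ∈ F, x ∈ ends e := by
  unfold vertsOf
  simp

lemma exists_maximal_trail :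
    ∀ (N : ℕ) (F : Finset E) (u : V), F.card ≤ N →
    ∃ l v', l.Nodup ∧ IsWalk ends u l v' ∧ l.toFinset ⊆ F ∧
      degIn ends (F \ l.toFinset) v' = 0 := by
  intro N
  induction N with
  | zero =>
    intro F u hF
    have : F = ∅ := Finset.card_eq_zero.1 (Nat.le_zero.1 hF)
    subst this
    exact ⟨[], u, List.nodup_nil, rfl, by simp, by simp [degIn_empty]⟩
  | succ N ih =>
    intro F u hF
    by_cases h0 : degIn ends F u = 0
    · exact ⟨[], u, List.nodup_nil, rfl, by simp, by simpa using h0⟩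
    · obtain ⟨e, he, hu⟩ := degIn_pos_iff.1 (Nat.pos_of_ne_zero h0)
      obtain ⟨x, hx⟩ := Sym2.mem_iff_exists.1 hu
      have hcard : (F.erase e).card ≤ N := by
        have := Finset.card_erase_lt_of_mem he
        omega
      obtain ⟨l, v', hnd, hw, hsub, hdeg⟩ := ih (F.erase e) x hcard
      refine ⟨e :: l, v', ?_, ⟨x, hx, hw⟩, ?_, ?_⟩
      · rw [List.nodup_cons]
        exact ⟨fun hc => Finset.notMem_erase e F (hsub (List.mem_toFinset.2 hc)), hnd⟩
      · rw [List.toFinset_cons]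
        exact Finset.insert_subset he (hsub.trans (Finset.erase_subset e F))
      · have : F \ (e :: l).toFinset = (F.erase e) \ l.toFinset := by
          ext f
          simp only [List.toFinset_cons, Finset.mem_sdiff, Finset.mem_insert, Finset.mem_erase,
            List.mem_toFinset]
          tauto
        rw [this]
        exact hdeg

lemma exists_boundary_edge [Fintype V] {F D : Finset E} (hconn : connIn ends F) (hD : D ⊆ F)
    (hv : (vertsOf ends D).Nonempty) (hne : (F \ D).Nonempty) :
    ∃ f ∈ F \ D, ∃ y, y ∈ ends f ∧ y ∈ vertsOf ends D := by
  obtain ⟨w₀, hw₀⟩ := hv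
  obtain ⟨e₀, he₀⟩ := hne
  have he₀F : e₀ ∈ F := (Finset.mem_sdiff.1 he₀).1
  obtain ⟨⟨za, zb⟩, hz⟩ := Quot.exists_rep (ends e₀)
  have hz' : ends e₀ = s(za, zb) := hz.symm
  have hza : za ∈ ends e₀ := by rw [hz']; simp
  have hzF : za ∈ vertsOf ends F := mem_vertsOf.2 ⟨e₀, he₀F, hza⟩
  have hw₀F : w₀ ∈ vertsOf ends F := by
    obtain ⟨e, heD, hwe⟩ := mem_vertsOf.1 hw₀
    exact mem_vertsOf.2 ⟨e, hD heD, hwe⟩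
  have hchain := hconn za hzF w₀ hw₀F
  -- general claim
  have claim : ∀ z : V, Relation.ReflTransGen (adjIn ends F) z w₀ →
      (∃ e ∈ F \ D, z ∈ ends e) → ∃ f ∈ F \ D, ∃ y, y ∈ ends f ∧ y ∈ vertsOf ends D := by
    intro z hz hze
    induction hz using Relation.ReflTransGen.head_induction_on with
    | refl =>
      obtain ⟨e, heFD, hwe⟩ := hze
      exact ⟨e, heFD, w₀, hwe, hw₀⟩
    | head hadj htail ih =>
      rename_i a c
      obtain ⟨ea, heaFD, haea⟩ := hze
      by_cases haD : a ∈ vertsOf ends D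
      · exact ⟨ea, heaFD, a, haea, haD⟩
      · obtain ⟨g, hgF, hg⟩ := hadj
        by_cases hgD : g ∈ D
        · exact absurd (mem_vertsOf.2 ⟨g, hgD, by rw [hg]; simp⟩) haD
        · refine ih ⟨g, Finset.mem_sdiff.2 ⟨hgF, hgD⟩, by rw [hg]; simp⟩
  exact claim za hchain ⟨e₀, he₀, hza⟩

end Trails

section EulerMain

variable {ends : E → Sym2 V} [DecidableEq E]

lemma zmod2_ne_zero' : ∀ a : ZMod 2, a ≠ 0 → a = 1 := by decide

lemma zmod2_ne_zero {a : ZMod 2} (h : a ≠ 0) : a = 1 := zmod2_ne_zero' a h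

lemma euler_extend [Fintype V] {F : Finset E} (hconn : connIn ends F) :
    ∀ (N : ℕ) (l : List E) (u v : V), (F \ l.toFinset).card ≤ N → l.Nodup →
      IsWalk ends u l v → l.toFinset ⊆ F → l ≠ [] →
      (∀ x, (degIn ends (F \ l.toFinset) x : ZMod 2) = 0) →
      ∃ l', l'.Nodup ∧ IsWalk ends u l' v ∧ l'.toFinset = F := by
  intro N
  induction N with
  | zero =>
    intro l u v hN hnd hw hsub _ _
    have : F \ l.toFinset = ∅ := Finset.card_eq_zero.1 (Nat.le_zero.1 hN)
    exact ⟨l, hnd, hw, Finset.Subset.antisymm hsub (Finset.sdiff_eq_empty_iff_subset.1 this)⟩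
  | succ N ih =>
    intro l u v hN hnd hw hsub hlne hpar
    by_cases hFD : F ⊆ l.toFinset
    · exact ⟨l, hnd, hw, Finset.Subset.antisymm hsub hFD⟩
    · set D := l.toFinset with hDdef
      have hneFD : (F \ D).Nonempty := by
        rw [Finset.sdiff_nonempty]; exact hFD
      have hvD : (vertsOf ends D).Nonempty := by
        obtain ⟨e, l0, rfl⟩ : ∃ e l0, l = e :: l0 := by
          cases l with
          | nil => exact absurd rfl hlne
          | cons e l0 => exact ⟨e, l0, rfl⟩
        obtain ⟨x, hx, _⟩ := hw
        exact ⟨u, mem_vertsOf.2 ⟨e, by simp [hDdef], by rw [hx]; simp⟩⟩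
      obtain ⟨f, hfFD, y, hyf, hyD⟩ := exists_boundary_edge hconn hsub hvD hneFD
      have hdegpos : 0 < degIn ends (F \ D) y := degIn_pos_iff.2 ⟨f, hfFD, hyf⟩
      obtain ⟨c, y', hcnd, hcw, hcsub, hcdeg⟩ :=
        exists_maximal_trail (ends := ends) (F \ D).card (F \ D) y le_rfl
      have hdecomp : ∀ x, degIn ends (F \ D) x
          = degIn ends c.toFinset x + degIn ends ((F \ D) \ c.toFinset) x := by
        intro x
        rw [← degIn_union Finset.disjoint_sdiff, Finset.union_sdiff_of_subset hcsub]
      have hy' : y' = y := by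
        by_contra hyy
        have h1 := hdecomp y'
        rw [hcdeg, Nat.add_zero] at h1
        have h2 := walk_degree_parity hcw hcnd y'
        rw [← h1, if_neg (fun hc => hyy hc), if_pos rfl] at h2
        have h3 := hpar y'
        rw [h2] at h3
        exact one_ne_zero (by rwa [zero_add] at h3)
      rw [hy'] at hcw hcdeg
      have hcne : c ≠ [] := by
        intro hc
        subst hc
        simp only [List.toFinset_nil, Finset.sdiff_empty] at hcdeg
        omega
      -- split the walk l at y
      obtain ⟨e, heD, hye⟩ := mem_vertsOf.1 hyD
      obtain ⟨l1, l2, rfl, hw1, hw2⟩ := hw.split (List.mem_toFinset.1 heD) hye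
      -- new trail
      have hndl := List.nodup_append.1 hnd
      have hcsub' : ∀ g ∈ c, g ∈ F \ D := fun g hg => hcsub (List.mem_toFinset.2 hg)
      have hcnotl : ∀ g ∈ c, g ∉ l1 ++ l2 := by
        intro g hg hgl
        have := (Finset.mem_sdiff.1 (hcsub' g hg)).2
        exact this (by rw [hDdef]; exact List.mem_toFinset.2 hgl)
      have hnd' : (l1 ++ (c ++ l2)).Nodup := by
        rw [List.nodup_append]
        refine ⟨hndl.1, ?_, ?_⟩
        · rw [List.nodup_append]
          exact ⟨hcnd, hndl.2.1, fun g hg => fun b hb hgb =>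
            hcnotl g hg (List.mem_append.2 (Or.inr (by rw [hgb]; exact hb)))⟩
        · intro g hgl1 b hgc hgb
          subst hgb
          rcases List.mem_append.1 hgc with hgc | hgc
          · exact hcnotl g hgc (List.mem_append.2 (Or.inl hgl1))
          · exact hndl.2.2 g hgl1 g hgc rfl
      have hwalk' : IsWalk ends u (l1 ++ (c ++ l2)) v := hw1.append (hcw.append hw2)
      have htf : (l1 ++ (c ++ l2)).toFinset = D ∪ c.toFinset := by
        rw [hDdef]
        ext g
        simp only [List.toFinset_append, Finset.mem_union, List.mem_toFinset]
        tauto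
      have hsub' : (l1 ++ (c ++ l2)).toFinset ⊆ F := by
        rw [htf]
        exact Finset.union_subset hsub (hcsub.trans Finset.sdiff_subset)
      have hsd : F \ (l1 ++ (c ++ l2)).toFinset = (F \ D) \ c.toFinset := by
        rw [htf, Finset.sdiff_union_distrib]
        ext g
        simp only [Finset.mem_inter, Finset.mem_sdiff]
        tauto
      have hcard' : (F \ (l1 ++ (c ++ l2)).toFinset).card ≤ N := by
        rw [hsd]
        obtain ⟨g, hg⟩ : ∃ g, g ∈ c := by
          cases c with
          | nil => exact absurd rfl hcne
          | cons g c' => exact ⟨g, List.mem_cons_self⟩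
        have hss : (F \ D) \ c.toFinset ⊂ F \ D := by
          refine Finset.ssubset_iff_of_subset Finset.sdiff_subset |>.2 ?_
          exact ⟨g, hcsub' g hg, fun hc => (Finset.mem_sdiff.1 hc).2 (List.mem_toFinset.2 hg)⟩
        have := Finset.card_lt_card hss
        omega
      have hpar' : ∀ x, (degIn ends (F \ (l1 ++ (c ++ l2)).toFinset) x : ZMod 2) = 0 := by
        intro x
        rw [hsd]
        have h1 := hdecomp x
        have h2 := walk_degree_parity hcw hcnd x
        have h4 : (degIn ends c.toFinset x : ZMod 2) = 0 := by
          rw [h2]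
          by_cases hxy : x = y
          · rw [if_pos hxy]; decide
          · rw [if_neg hxy]; decide
        have h3 := hpar x
        rw [h1, Nat.cast_add, h4, zero_add] at h3
        exact h3
      have hlne' : l1 ++ (c ++ l2) ≠ [] := by
        intro hc
        rcases List.append_eq_nil_iff.1 hc with ⟨_, hc2⟩
        rcases List.append_eq_nil_iff.1 hc2 with ⟨hc3, _⟩
        exact hcne hc3
      exact ih (l1 ++ (c ++ l2)) u v hcard' hnd' hwalk' hsub' hlne' hpar'

open Classical in
lemma exists_euler_trail [Fintype V] {F : Finset E} (hconn : connIn ends F) (hne : F.Nonempty)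
    (hodd : ((Finset.univ : Finset V).filter fun x => (degIn ends F x : ZMod 2) ≠ 0).card ≤ 2) :
    ∃ u l v, l.Nodup ∧ IsWalk ends u l v ∧ l.toFinset = F := by
  classical
  by_cases hO : ∃ x0, (degIn ends F x0 : ZMod 2) ≠ 0
  · obtain ⟨u, hu⟩ := hO
    have hdegu : 0 < degIn ends F u := by
      rcases Nat.eq_zero_or_pos (degIn ends F u) with h | h
      · rw [h] at hu; simp at hu
      · exact h
    obtain ⟨l, y, hnd, hw, hsub, hdeg⟩ :=
      exists_maximal_trail (ends := ends) F.card F u le_rfl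
    have hdecomp : ∀ x, degIn ends F x
        = degIn ends l.toFinset x + degIn ends (F \ l.toFinset) x := by
      intro x
      rw [← degIn_union Finset.disjoint_sdiff, Finset.union_sdiff_of_subset hsub]
    have hlne : l ≠ [] := by
      intro hc
      subst hc
      have := isWalk_nil.1 hw
      subst this
      simp only [List.toFinset_nil, Finset.sdiff_empty] at hdeg
      omega
    have hyu : y ≠ u := by
      intro hc
      subst hc
      have h1 := hdecomp y
      rw [hdeg, Nat.add_zero] at h1
      have h2 := walk_degree_parity hw hnd y
      rw [if_pos rfl] at h2
      rw [h1, h2] at hu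
      exact hu (by decide)
    have hyodd : (degIn ends F y : ZMod 2) ≠ 0 := by
      have h1 := hdecomp y
      rw [hdeg, Nat.add_zero] at h1
      have h2 := walk_degree_parity hw hnd y
      rw [if_neg hyu, if_pos rfl, zero_add] at h2
      rw [h1, h2]
      decide
    have hkey : ∀ x, (degIn ends F x : ZMod 2)
        = (if x = u then 1 else 0) + (if x = y then 1 else 0) := by
      intro x
      by_cases hxu : x = u
      · subst hxu
        rw [if_pos rfl, if_neg (fun hc => hyu hc.symm), add_zero]
        exact zmod2_ne_zero hu
      · by_cases hxy : x = y
        · subst hxy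
          rw [if_neg hxu, if_pos rfl, zero_add]
          exact zmod2_ne_zero hyodd
        · rw [if_neg hxu, if_neg hxy, add_zero]
          by_contra hx
          have hsubset : ({u, y, x} : Finset V) ⊆
              (Finset.univ.filter fun z => (degIn ends F z : ZMod 2) ≠ 0) := by
            intro z hz
            simp only [Finset.mem_insert, Finset.mem_singleton] at hz
            rcases hz with rfl | rfl | rfl <;>
              exact Finset.mem_filter.2 ⟨Finset.mem_univ _, by assumption⟩
          have hc3 : ({u, y, x} : Finset V).card = 3 := by
            rw [Finset.card_insert_of_notMem, Finset.card_insert_of_notMem,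
              Finset.card_singleton]
            · simp only [Finset.mem_singleton]; exact fun hc => hxy hc.symm
            · simp only [Finset.mem_insert, Finset.mem_singleton]
              push_neg
              exact ⟨fun hc => hyu hc.symm, fun hc => hxu hc.symm⟩
          have := Finset.card_le_card hsubset
          omega
    have hpar : ∀ x, (degIn ends (F \ l.toFinset) x : ZMod 2) = 0 := by
      intro x
      have h1 := hdecomp x
      have h2 := walk_degree_parity hw hnd x
      have h3 := hkey x
      rw [h1, Nat.cast_add, h2] at h3
      exact left_eq_add.1 h3.symm
    obtain ⟨l', h1, h2, h3⟩ := euler_extend hconn F.card l u y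
      (Finset.card_le_card Finset.sdiff_subset) hnd hw hsub hlne hpar
    exact ⟨u, l', y, h1, h2, h3⟩
  · push_neg at hO
    obtain ⟨e₀, he₀⟩ := hne
    obtain ⟨⟨za, zb⟩, hz⟩ := Quot.exists_rep (ends e₀)
    have hz' : ends e₀ = s(za, zb) := hz.symm
    have hza : za ∈ ends e₀ := by rw [hz']; simp
    have hdegu : 0 < degIn ends F za := degIn_pos_iff.2 ⟨e₀, he₀, hza⟩
    obtain ⟨l, y, hnd, hw, hsub, hdeg⟩ :=
      exists_maximal_trail (ends := ends) F.card F za le_rfl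
    have hdecomp : ∀ x, degIn ends F x
        = degIn ends l.toFinset x + degIn ends (F \ l.toFinset) x := by
      intro x
      rw [← degIn_union Finset.disjoint_sdiff, Finset.union_sdiff_of_subset hsub]
    have hlne : l ≠ [] := by
      intro hc
      subst hc
      have := isWalk_nil.1 hw
      subst this
      simp only [List.toFinset_nil, Finset.sdiff_empty] at hdeg
      omega
    have hyu : y = za := by
      by_contra hc
      have h1 := hdecomp y
      rw [hdeg, Nat.add_zero] at h1
      have h2 := walk_degree_parity hw hnd y
      rw [if_neg hc, if_pos rfl, zero_add] at h2
      have := hO y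
      rw [h1, h2] at this
      exact one_ne_zero this
    rw [hyu] at hw hdeg
    have hpar : ∀ x, (degIn ends (F \ l.toFinset) x : ZMod 2) = 0 := by
      intro x
      have h1 := hdecomp x
      have h2 := walk_degree_parity hw hnd x
      have h4 : (degIn ends l.toFinset x : ZMod 2) = 0 := by
        rw [h2]
        by_cases hxy : x = za
        · rw [if_pos hxy]; decide
        · rw [if_neg hxy]; decide
      have h3 := hO x
      rw [h1, Nat.cast_add, h4, zero_add] at h3
      exact h3
    obtain ⟨l', h1, h2, h3⟩ := euler_extend hconn F.card l za za
      (Finset.card_le_card Finset.sdiff_subset) hnd hw hsub hlne hpar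
    exact ⟨za, l', za, h1, h2, h3⟩

end EulerMain

section WalkVert

variable {ends : E → Sym2 V}

open Classical in
noncomputable def nxt (ends : E → Sym2 V) (u : V) (e : E) : V :=
  if h : u ∈ ends e then Sym2.Mem.other h else u

lemma nxt_eq {u x : V} {e : E} (h : ends e = s(u, x)) : nxt ends u e = x := by
  have hu : u ∈ ends e := by rw [h]; simp
  unfold nxt
  rw [dif_pos hu]
  exact Sym2.congr_right.1 ((Sym2.other_spec hu).trans h)

noncomputable def walkVert (ends : E → Sym2 V) : V → List E → ℕ → V
  | u, _, 0 => u
  | u, [], _ + 1 => u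
  | u, e :: l, k + 1 => walkVert ends (nxt ends u e) l k

@[simp] lemma walkVert_zero (u : V) (l : List E) : walkVert ends u l 0 = u := by
  cases l <;> rfl

lemma walkVert_cons (u : V) (e : E) (l : List E) (k : ℕ) :
    walkVert ends u (e :: l) (k + 1) = walkVert ends (nxt ends u e) l k := rfl

lemma walkVert_last {u v : V} {l : List E} (h : IsWalk ends u l v) :
    walkVert ends u l l.length = v := by
  induction l generalizing u with
  | nil => exact isWalk_nil.1 h
  | cons e l ih =>
    obtain ⟨x, hx, hw⟩ := h
    rw [List.length_cons, walkVert_cons, nxt_eq hx]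
    exact ih hw

lemma walkVert_get {u v : V} {l : List E} (h : IsWalk ends u l v) {k : ℕ} (hk : k < l.length) :
    ends (l.get ⟨k, hk⟩) = s(walkVert ends u l k, walkVert ends u l (k + 1)) := by
  induction l generalizing u k with
  | nil => simp at hk
  | cons e l ih =>
    obtain ⟨x, hx, hw⟩ := h
    cases k with
    | zero =>
      rw [walkVert_zero, walkVert_cons, nxt_eq hx, walkVert_zero]
      exact hx
    | succ k =>
      rw [walkVert_cons, walkVert_cons, nxt_eq hx]
      exact ih hw (by simpa using hk)

end WalkVert

section App

variable {n m : ℕ} {T : Finset (Fin n)} {a : {x // x ∈ T} → Fin m × Fin m}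

lemma bip_no_loop (x : {x // x ∈ T}) (z : Fin m ⊕ Fin m) : bipEnds T a x ≠ s(z, z) := by
  intro hc
  rcases Sym2.eq_iff.1 hc with ⟨h1, h2⟩ | ⟨h1, h2⟩ <;> rw [← h2] at h1 <;> simp at h1

lemma mog_card_pos (h : isMOG T a) : 0 < T.card := by
  rcases h with ⟨_, _, hcard⟩
  omega

lemma mog_three_le (h : isMOG T a) : 3 ≤ T.card := by
  obtain ⟨hconn, hdeg, hcard⟩ := h
  have hx : ∃ x : {x // x ∈ T}, True := by
    have : 0 < Fintype.card {x // x ∈ T} := by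
      rw [Fintype.card_coe]; omega
    obtain ⟨x⟩ := Fintype.card_pos_iff.1 this
    exact ⟨x, trivial⟩
  obtain ⟨x, -⟩ := hx
  have h1 : (Sum.inl (a x).1 : Fin m ⊕ Fin m) ∈ vertsOf (bipEnds T a) Finset.univ :=
    mem_vertsOf.2 ⟨x, Finset.mem_univ x, by rw [bipEnds]; simp⟩
  have h2 : (Sum.inr (a x).2 : Fin m ⊕ Fin m) ∈ vertsOf (bipEnds T a) Finset.univ :=
    mem_vertsOf.2 ⟨x, Finset.mem_univ x, by rw [bipEnds]; simp⟩
  have hne : (Sum.inl (a x).1 : Fin m ⊕ Fin m) ≠ Sum.inr (a x).2 := by simp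
  have : 2 ≤ (vertsOf (bipEnds T a) Finset.univ).card := by
    have := Finset.one_lt_card.2 ⟨_, h1, _, h2, hne⟩
    omega
  omega

open Classical in
lemma mog_odd_card_le (h : isMOG T a) :
    ((Finset.univ : Finset (Fin m ⊕ Fin m)).filter
      fun x => (degIn (bipEnds T a) Finset.univ x : ZMod 2) ≠ 0).card ≤ 2 := by
  classical
  obtain ⟨hconn, hdeg, hcard⟩ := h
  set ends := bipEnds T a
  set W := vertsOf ends (Finset.univ : Finset {x // x ∈ T}) with hW
  set O := ((Finset.univ : Finset (Fin m ⊕ Fin m)).filter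
      fun x => (degIn ends Finset.univ x : ZMod 2) ≠ 0) with hO
  have hOW : O ⊆ W := by
    intro x hx
    have hne : (degIn ends Finset.univ x : ZMod 2) ≠ 0 := (Finset.mem_filter.1 hx).2
    have hpos : 0 < degIn ends Finset.univ x := by
      rcases Nat.eq_zero_or_pos (degIn ends Finset.univ x) with h0 | h0
      · rw [h0] at hne; simp at hne
      · exact h0
    obtain ⟨e, he, hxe⟩ := degIn_pos_iff.1 hpos
    exact mem_vertsOf.2 ⟨e, he, hxe⟩
  have hsum : ∑ x : Fin m ⊕ Fin m, degIn ends Finset.univ x = 2 * T.card := by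
    rw [sum_degIn]
    congr 1
    rw [Finset.card_univ, Fintype.card_coe]
  have hzero : ∀ x ∈ (Finset.univ : Finset (Fin m ⊕ Fin m)) \ W, degIn ends Finset.univ x = 0 := by
    intro x hx
    refine degIn_eq_zero fun e he hxe => ?_
    exact (Finset.mem_sdiff.1 hx).2 (mem_vertsOf.2 ⟨e, he, hxe⟩)
  have hsumW : ∑ x ∈ W, degIn ends Finset.univ x = 2 * T.card := by
    rw [← hsum]
    exact Finset.sum_subset (Finset.subset_univ W)
      (fun x _ hxW => degIn_eq_zero fun e he hxe => hxW (mem_vertsOf.2 ⟨e, he, hxe⟩))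
  have hsplit : ∑ x ∈ W \ O, degIn ends Finset.univ x + ∑ x ∈ O, degIn ends Finset.univ x
      = 2 * T.card := by
    rw [Finset.sum_sdiff hOW, hsumW]
  have hlow1 : (W \ O).card * 2 ≤ ∑ x ∈ W \ O, degIn ends Finset.univ x := by
    have := Finset.card_nsmul_le_sum (W \ O) (fun x => degIn ends Finset.univ x) 2
      (fun x hx => hdeg x (Finset.mem_sdiff.1 hx).1)
    simpa [smul_eq_mul] using this
  have hlow2 : O.card * 3 ≤ ∑ x ∈ O, degIn ends Finset.univ x := by
    have h3 : ∀ x ∈ O, 3 ≤ degIn ends Finset.univ x := by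
      intro x hx
      have h2 : 2 ≤ degIn ends Finset.univ x := hdeg x (hOW hx)
      have hodd : ¬ (2 ∣ degIn ends Finset.univ x) := by
        intro hdvd
        exact (Finset.mem_filter.1 hx).2
          ((ZMod.natCast_eq_zero_iff _ 2).2 hdvd)
      omega
    have := Finset.card_nsmul_le_sum O (fun x => degIn ends Finset.univ x) 3 h3
    simpa [smul_eq_mul] using this
  have hOle : O.card ≤ W.card := Finset.card_le_card hOW
  have hWO : (W \ O).card = W.card - O.card := Finset.card_sdiff_of_subset hOW
  omega

lemma mog_euler (h : isMOG T a) :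
    ∃ d : ((Fin m ⊕ Fin m) × (Fin m ⊕ Fin m)) × List {x // x ∈ T},
      d.2.Nodup ∧ IsWalk (bipEnds T a) d.1.1 d.2 d.1.2 ∧
        d.2.toFinset = (Finset.univ : Finset {x // x ∈ T}) := by
  classical
  have hne : (Finset.univ : Finset {x // x ∈ T}).Nonempty := by
    rw [← Finset.card_pos, Finset.card_univ, Fintype.card_coe]
    exact mog_card_pos h
  obtain ⟨u, l, v, h1, h2, h3⟩ := exists_euler_trail h.1 hne (mog_odd_card_le h)
  exact ⟨((u, v), l), h1, h2, h3⟩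

noncomputable def mogD (h : isMOG T a) :
    ((Fin m ⊕ Fin m) × (Fin m ⊕ Fin m)) × List {x // x ∈ T} :=
  (mog_euler h).choose

lemma mogD_nodup (h : isMOG T a) : (mogD h).2.Nodup := (mog_euler h).choose_spec.1

lemma mogD_walk (h : isMOG T a) :
    IsWalk (bipEnds T a) (mogD h).1.1 (mogD h).2 (mogD h).1.2 :=
  (mog_euler h).choose_spec.2.1

lemma mogD_cover (h : isMOG T a) :
    (mogD h).2.toFinset = (Finset.univ : Finset {x // x ∈ T}) :=
  (mog_euler h).choose_spec.2.2

lemma mogD_len (h : isMOG T a) : (mogD h).2.length = T.card := by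
  classical
  have hc := congrArg Finset.card (mogD_cover h)
  rwa [List.toFinset_card_of_nodup (mogD_nodup h), Finset.card_univ, Fintype.card_coe] at hc

noncomputable def mogW (h : isMOG T a) : ℕ → Fin m ⊕ Fin m :=
  walkVert (bipEnds T a) (mogD h).1.1 (mogD h).2

noncomputable def mogSigma (h : isMOG T a) : Fin T.card ≃ {x // x ∈ T} :=
  Equiv.ofBijective (fun i => (mogD h).2.get (Fin.cast (mogD_len h).symm i))
    (by
      classical
      refine (Fintype.bijective_iff_injective_and_card _).2 ⟨?_, by simp [Fintype.card_coe]⟩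
      exact (List.nodup_iff_injective_get.1 (mogD_nodup h)).comp (Fin.cast_injective _))

lemma mog_edge (h : isMOG T a) (i : Fin T.card) :
    bipEnds T a (mogSigma h i) = s(mogW h i.1, mogW h (i.1 + 1)) := by
  have hk : (i : ℕ) < (mogD h).2.length := by rw [mogD_len h]; exact i.2
  exact walkVert_get (mogD_walk h) hk

open Classical in
lemma mog_image (h : isMOG T a) :
    Finset.image (fun k : Fin (T.card + 1) => mogW h k.1) Finset.univ
      = vertsOf (bipEnds T a) Finset.univ := by
  classical
  have ht := mog_three_le h
  ext z
  simp only [Finset.mem_image]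
  rw [mem_vertsOf]
  constructor
  · rintro ⟨k, -, rfl⟩
    by_cases hk : (k : ℕ) < T.card
    · refine ⟨mogSigma h ⟨k.1, hk⟩, Finset.mem_univ _, ?_⟩
      rw [mog_edge h ⟨k.1, hk⟩]
      simp
    · have hk' : (k : ℕ) = T.card := by
        have := k.2
        omega
      have hlt : T.card - 1 < T.card := by omega
      refine ⟨mogSigma h ⟨T.card - 1, hlt⟩, Finset.mem_univ _, ?_⟩
      rw [mog_edge h ⟨T.card - 1, hlt⟩]
      have : T.card - 1 + 1 = (k : ℕ) := by omega
      rw [this]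
      simp
  · rintro ⟨e, -, hz⟩
    have hel : e ∈ (mogD h).2 := by
      rw [← List.mem_toFinset, mogD_cover h]
      exact Finset.mem_univ e
    obtain ⟨i, hi⟩ := List.mem_iff_get.1 hel
    have hge := walkVert_get (mogD_walk h) i.2
    rw [hi] at hge
    rw [hge, Sym2.mem_iff] at hz
    have hilen : (i : ℕ) < T.card := by rw [← mogD_len h]; exact i.2
    rcases hz with rfl | rfl
    · exact ⟨⟨i.1, by omega⟩, Finset.mem_univ _, rfl⟩
    · exact ⟨⟨i.1 + 1, by omega⟩, Finset.mem_univ _, rfl⟩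

open Classical in
noncomputable def mogR (h : isMOG T a) : Finset (Fin (T.card + 1)) :=
  Finset.univ.filter fun k => ∃ j, j < k ∧ mogW h j.1 = mogW h k.1

lemma mogR_card (h : isMOG T a) : (mogR h).card = 2 := by
  classical
  have ht := mog_three_le h
  have hv := h.2.2
  have himg := congrArg Finset.card (mog_image h)
  have hcompl : ((mogR h)ᶜ).card
      = (Finset.image (fun k : Fin (T.card + 1) => mogW h k.1) Finset.univ).card := by
    refine Finset.card_bij (fun k _ => mogW h k.1) ?_ ?_ ?_
    · intro k _
      exact Finset.mem_image.2 ⟨k, Finset.mem_univ _, rfl⟩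
    · intro k1 hk1 k2 hk2 hkk
      by_contra hne
      rcases lt_trichotomy k1 k2 with hlt | heq | hlt
      · exact (Finset.mem_compl.1 hk2) ((Finset.mem_filter.2
          ⟨Finset.mem_univ _, k1, hlt, hkk⟩))
      · exact hne heq
      · exact (Finset.mem_compl.1 hk1) ((Finset.mem_filter.2
          ⟨Finset.mem_univ _, k2, hlt, hkk.symm⟩))
    · intro z hz
      obtain ⟨k, -, hk⟩ := Finset.mem_image.1 hz
      have hS : (Finset.univ.filter fun j : Fin (T.card + 1) => mogW h j.1 = z).Nonempty :=
        ⟨k, Finset.mem_filter.2 ⟨Finset.mem_univ _, hk⟩⟩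
      set k₀ := (Finset.univ.filter fun j : Fin (T.card + 1) => mogW h j.1 = z).min' hS with hk₀
      have hk₀mem := Finset.min'_mem _ hS
      have hk₀val : mogW h k₀.1 = z := (Finset.mem_filter.1 hk₀mem).2
      refine ⟨k₀, Finset.mem_compl.2 ?_, hk₀val⟩
      intro hR
      obtain ⟨j, hj, hjeq⟩ := (Finset.mem_filter.1 hR).2
      have : k₀ ≤ j := Finset.min'_le _ j
        (Finset.mem_filter.2 ⟨Finset.mem_univ _, hjeq.trans hk₀val⟩)
      exact absurd hj (not_lt.2 this)
  have h1 : ((mogR h)ᶜ).card = Fintype.card (Fin (T.card + 1)) - (mogR h).card :=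
    Finset.card_compl _
  have h2 := Finset.card_le_univ (mogR h)
  rw [Fintype.card_fin] at h1 h2
  rw [hcompl, himg] at h1
  omega

lemma mogR_nonempty (h : isMOG T a) : (mogR h).Nonempty := by
  rw [← Finset.card_pos, mogR_card h]; omega

noncomputable def mogI1 (h : isMOG T a) : Fin (T.card + 1) := (mogR h).min' (mogR_nonempty h)

noncomputable def mogI2 (h : isMOG T a) : Fin (T.card + 1) := (mogR h).max' (mogR_nonempty h)

lemma mogI1_mem (h : isMOG T a) : mogI1 h ∈ mogR h := Finset.min'_mem _ _

lemma mogI2_mem (h : isMOG T a) : mogI2 h ∈ mogR h := Finset.max'_mem _ _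

lemma mogI_ne (h : isMOG T a) : mogI1 h ≠ mogI2 h :=
  ne_of_lt (Finset.min'_lt_max'_of_card _ (by rw [mogR_card h]; omega))

lemma mogR_eq (h : isMOG T a) : mogR h = {mogI1 h, mogI2 h} := by
  classical
  refine (Finset.eq_of_subset_of_card_le ?_ ?_).symm
  · intro k hk
    rcases Finset.mem_insert.1 hk with rfl | hk
    · exact mogI1_mem h
    · rw [Finset.mem_singleton] at hk
      subst hk
      exact mogI2_mem h
  · rw [mogR_card h]
    rw [Finset.card_insert_of_notMem (by simp [mogI_ne h]), Finset.card_singleton]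

open Classical in
noncomputable def mogPtr (h : isMOG T a) (i : Fin (T.card + 1)) : Fin (T.card + 1) :=
  if hi : (Finset.univ.filter fun j : Fin (T.card + 1) =>
      j < i ∧ mogW h j.1 = mogW h i.1).Nonempty
  then (Finset.univ.filter fun j : Fin (T.card + 1) =>
      j < i ∧ mogW h j.1 = mogW h i.1).min' hi
  else i

lemma mogPtr_spec (h : isMOG T a) {i : Fin (T.card + 1)} (hi : i ∈ mogR h) :
    mogPtr h i < i ∧ mogW h (mogPtr h i).1 = mogW h i.1 := by
  classical
  obtain ⟨j, hj, hjeq⟩ := (Finset.mem_filter.1 hi).2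
  have hne : (Finset.univ.filter fun j : Fin (T.card + 1) =>
      j < i ∧ mogW h j.1 = mogW h i.1).Nonempty :=
    ⟨j, Finset.mem_filter.2 ⟨Finset.mem_univ _, hj, hjeq⟩⟩
  unfold mogPtr
  rw [dif_pos hne]
  exact (Finset.mem_filter.1 (Finset.min'_mem _ hne)).2

lemma mog_flip (h : isMOG T a) {k : ℕ} (hk : k < T.card) :
    (mogW h (k + 1)).isLeft = !(mogW h k).isLeft := by
  have he := mog_edge h ⟨k, hk⟩
  rw [bipEnds] at he
  rcases Sym2.eq_iff.1 he with ⟨h1, h2⟩ | ⟨h1, h2⟩ <;> rw [← h1, ← h2] <;> simp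

lemma mog_side (h : isMOG T a) :
    ∀ k, k ≤ T.card →
      (mogW h k).isLeft = (if Even k then (mogW h 0).isLeft else !(mogW h 0).isLeft) := by
  intro k
  induction k with
  | zero => intro _; simp
  | succ k ih =>
    intro hk
    rw [mog_flip h (by omega), ih (by omega)]
    rcases Nat.even_or_odd k with he | ho
    · have h1 : ¬ Even (k + 1) := by simp [Nat.even_add_one, he]
      rw [if_pos he, if_neg h1]
    · have h1 : ¬ Even k := Nat.not_even_iff_odd.2 ho
      have h2 : Even (k + 1) := Nat.even_add_one.2 h1
      rw [if_neg h1, if_pos h2, Bool.not_not]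

lemma mogRc_card (h : isMOG T a) : ((mogR h)ᶜ).card = T.card - 1 := by
  classical
  have := Finset.card_compl (mogR h)
  rw [mogR_card h, Fintype.card_fin] at this
  omega

noncomputable def mogEnc (h : isMOG T a) :
    Bool × (Fin T.card ≃ {x // x ∈ T}) × (Fin (T.card + 1) × Fin (T.card + 1))
      × (Fin (T.card + 1) × Fin (T.card + 1)) × (Fin (T.card - 1) → Fin m) :=
  ((mogW h 0).isLeft, mogSigma h, (mogI1 h, mogPtr h (mogI1 h)),
    (mogI2 h, mogPtr h (mogI2 h)),
    fun i => Sum.elim id id (mogW h ((((mogR h)ᶜ.orderIsoOfFin (mogRc_card h)) i).1 : Fin (T.card + 1)).1))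

end App

section Inj

lemma sum_elim_ext {α : Type*} {x y : α ⊕ α} (h1 : x.isLeft = y.isLeft)
    (h2 : Sum.elim id id x = Sum.elim id id y) : x = y := by
  cases x <;> cases y <;> simp_all

lemma orderIsoOfFin_symm_congr {α : Type*} [LinearOrder α] {s s' : Finset α} (hss : s = s')
    {d : ℕ} (hs : s.card = d) (hs' : s'.card = d) {x : α} (hx : x ∈ s) (hx' : x ∈ s') :
    (s.orderIsoOfFin hs).symm ⟨x, hx⟩ = (s'.orderIsoOfFin hs').symm ⟨x, hx'⟩ := by
  subst hss; rfl

lemma mogEnc_inj {n m : ℕ} {T : Finset (Fin n)}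
    {a1 a2 : {x // x ∈ T} → Fin m × Fin m} (h1 : isMOG T a1) (h2 : isMOG T a2)
    (heq : mogEnc (a := a1) h1 = mogEnc (a := a2) h2) : a1 = a2 := by
  classical
  simp only [mogEnc, Prod.mk.injEq] at heq
  obtain ⟨hB, hSig, ⟨hI1, hJ1⟩, ⟨hI2, hJ2⟩, hG⟩ := heq
  have hR : mogR h1 = mogR h2 := by
    rw [mogR_eq h1, mogR_eq h2, hI1, hI2]
  have hW : ∀ k : ℕ, k < T.card + 1 → mogW h1 k = mogW h2 k := by
    intro k
    induction k using Nat.strong_induction_on with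
    | _ k IH =>
      intro hk
      by_cases hkR : (⟨k, hk⟩ : Fin (T.card + 1)) ∈ mogR h1
      · rw [mogR_eq h1] at hkR
        rcases Finset.mem_insert.1 hkR with hki | hki
        · -- k is mogI1
          have hs1 := mogPtr_spec h1 (mogI1_mem h1)
          have hs2 := mogPtr_spec h2 (mogI1_mem h2)
          set j := mogPtr h1 (mogI1 h1) with hj
          have hjlt : (j : ℕ) < k := by
            have hlt := hs1.1
            rw [← hki] at hlt
            exact hlt
          have e1 : mogW h1 k = mogW h1 j.1 := by
            have hv := hs1.2
            rw [← hki] at hv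
            exact hv.symm
          have e2 : mogW h2 k = mogW h2 j.1 := by
            have hv := hs2.2
            rw [← hJ1, ← hI1, ← hki] at hv
            exact hv.symm
          rw [e1, e2]
          exact IH j.1 hjlt j.2
        · rw [Finset.mem_singleton] at hki
          have hs1 := mogPtr_spec h1 (mogI2_mem h1)
          have hs2 := mogPtr_spec h2 (mogI2_mem h2)
          set j := mogPtr h1 (mogI2 h1) with hj
          have hjlt : (j : ℕ) < k := by
            have hlt := hs1.1
            rw [← hki] at hlt
            exact hlt
          have e1 : mogW h1 k = mogW h1 j.1 := by
            have hv := hs1.2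
            rw [← hki] at hv
            exact hv.symm
          have e2 : mogW h2 k = mogW h2 j.1 := by
            have hv := hs2.2
            rw [← hJ2, ← hI2, ← hki] at hv
            exact hv.symm
          rw [e1, e2]
          exact IH j.1 hjlt j.2
      · have hkR2 : (⟨k, hk⟩ : Fin (T.card + 1)) ∉ mogR h2 := by rw [← hR]; exact hkR
        have hkc1 : (⟨k, hk⟩ : Fin (T.card + 1)) ∈ (mogR h1)ᶜ := Finset.mem_compl.2 hkR
        have hkc2 : (⟨k, hk⟩ : Fin (T.card + 1)) ∈ (mogR h2)ᶜ := Finset.mem_compl.2 hkR2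
        have hside : (mogW h1 k).isLeft = (mogW h2 k).isLeft := by
          rw [mog_side h1 k (by omega), mog_side h2 k (by omega), hB]
        set r := ((mogR h1)ᶜ.orderIsoOfFin (mogRc_card h1)).symm ⟨⟨k, hk⟩, hkc1⟩ with hr
        have hr2 : ((mogR h2)ᶜ.orderIsoOfFin (mogRc_card h2)).symm ⟨⟨k, hk⟩, hkc2⟩ = r := by
          rw [hr]
          exact (orderIsoOfFin_symm_congr (by rw [hR]) (mogRc_card h1) (mogRc_card h2)
            hkc1 hkc2).symm
        have hv1 : ((((mogR h1)ᶜ.orderIsoOfFin (mogRc_card h1)) r).1 : Fin (T.card + 1)).1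
            = k := by
          rw [hr, OrderIso.apply_symm_apply]
        have hv2 : ((((mogR h2)ᶜ.orderIsoOfFin (mogRc_card h2)) r).1 : Fin (T.card + 1)).1
            = k := by
          rw [← hr2, OrderIso.apply_symm_apply]
        have helim := congrFun hG r
        rw [hv1, hv2] at helim
        exact sum_elim_ext hside helim
  funext x
  obtain ⟨i, rfl⟩ := (mogSigma h1).surjective x
  have e1 := mog_edge h1 i
  have e2 := mog_edge h2 i
  have hsi : mogSigma h2 i = mogSigma h1 i := by rw [hSig]
  rw [hsi] at e2
  have hi2 := i.2
  have hwi : mogW h1 i.1 = mogW h2 i.1 := hW i.1 (by omega)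
  have hwi1 : mogW h1 (i.1 + 1) = mogW h2 (i.1 + 1) := hW _ (by omega)
  rw [← hwi, ← hwi1] at e2
  have hbb : bipEnds T a1 (mogSigma h1 i) = bipEnds T a2 (mogSigma h1 i) := e1.trans e2.symm
  rw [bipEnds, bipEnds] at hbb
  rcases Sym2.eq_iff.1 hbb with ⟨hA, hB'⟩ | ⟨hA, hB'⟩
  · exact Prod.ext (Sum.inl.inj hA) (Sum.inr.inj hB')
  · exact absurd hA (by simp)

end Inj

section Count

open Classical in
lemma card_mog_le {n m : ℕ} (T : Finset (Fin n)) :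
    Fintype.card {a : {x // x ∈ T} → Fin m × Fin m // isMOG T a}
      ≤ 2 * (T.card).factorial * (T.card + 1) ^ 4 * m ^ (T.card - 1) := by
  classical
  have hinj : Function.Injective
      (fun p : {a : {x // x ∈ T} → Fin m × Fin m // isMOG T a} => mogEnc p.2) := by
    intro p q hpq
    exact Subtype.ext (mogEnc_inj p.2 q.2 hpq)
  have hle := Fintype.card_le_of_injective _ hinj
  have hcard : Fintype.card (Bool × (Fin T.card ≃ {x // x ∈ T})
      × (Fin (T.card + 1) × Fin (T.card + 1)) × (Fin (T.card + 1) × Fin (T.card + 1))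
      × (Fin (T.card - 1) → Fin m))
      = 2 * (T.card).factorial * (T.card + 1) ^ 4 * m ^ (T.card - 1) := by
    simp only [Fintype.card_prod, Fintype.card_bool, Fintype.card_fin, Fintype.card_fun,
      Fintype.card_equiv ((Fintype.equivFinOfCardEq (Fintype.card_coe T)).symm)]
    ring
  rw [hcard] at hle
  exact hle

open Classical in
lemma expMOG_zero (m : ℕ) : expMOG 0 m = 0 := by
  classical
  rw [expMOG]
  refine Finset.sum_eq_zero fun T _ => Finset.sum_eq_zero fun a _ => ?_
  rw [if_neg]
  intro h
  have h1 := mog_card_pos h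
  have h2 : T.card ≤ 0 := by simpa using Finset.card_le_univ T
  omega

end Count

/-- For every `ε > 0` there is `C(ε)` such that for all `n`, `m`
with `m ≥ (1+ε)n`, the expected number of minimal obstruction subgraphs of the
random bipartite cuckoo multigraph is at most `C(ε)/m`. -/
theorem expected_minimal_obstruction_graphs_le (ε : ℝ) (hε : 0 < ε) :
    ∃ C : ℝ, ∀ n m : ℕ, (1 + ε) * (n : ℝ) ≤ (m : ℝ) → expMOG n m ≤ C / (m : ℝ) := by
  classical
  set x : ℝ := 1 / (1 + ε) with hx
  have hε1 : (0:ℝ) < 1 + ε := by linarith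
  have hx0 : 0 < x := by positivity
  have hx1 : x < 1 := by rw [hx, div_lt_one hε1]; linarith
  have hsum : Summable (fun t : ℕ => ((t:ℝ) + 1) ^ 4 * x ^ t) := by
    have h1 : Summable (fun t : ℕ => (t:ℝ) ^ 4 * x ^ t) :=
      summable_pow_mul_geometric_of_norm_lt_one 4
        (by rw [Real.norm_eq_abs, abs_of_pos hx0]; exact hx1)
    have h2 := (summable_nat_add_iff 1).2 h1
    have h3 := h2.mul_left x⁻¹
    refine h3.congr fun t => ?_
    push_cast
    field_simp
    ring
  refine ⟨2 * ∑' t : ℕ, ((t:ℝ) + 1) ^ 4 * x ^ t, ?_⟩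
  intro n m hm
  rcases Nat.eq_zero_or_pos m with rfl | hm1
  · have hn : n = 0 := by
      by_contra hn
      have h1 : (1:ℝ) ≤ (n:ℝ) := by exact_mod_cast Nat.one_le_iff_ne_zero.2 hn
      rw [Nat.cast_zero] at hm
      nlinarith
    subst hn
    rw [expMOG_zero, Nat.cast_zero, div_zero]
  · have hm0 : (0:ℝ) < (m:ℝ) := by exact_mod_cast hm1
    have hrw : expMOG n m = ∑ T : Finset (Fin n),
        (Fintype.card {a : {x // x ∈ T} → Fin m × Fin m // isMOG T a} : ℝ)
          * (1/(m:ℝ)) ^ (2 * T.card) := by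
      rw [expMOG]
      refine Finset.sum_congr rfl fun T _ => ?_
      rw [← Finset.sum_filter, Finset.sum_const, nsmul_eq_mul, Fintype.card_subtype]
    rw [hrw]
    set gg : ℕ → ℝ := fun t => if t = 0 then 0
      else 2 * (Nat.factorial t : ℝ) * ((t:ℝ) + 1) ^ 4 * (m:ℝ) ^ (t - 1) * (1/(m:ℝ)) ^ (2 * t)
      with hgg
    have hT : ∀ T : Finset (Fin n),
        (Fintype.card {a : {x // x ∈ T} → Fin m × Fin m // isMOG T a} : ℝ)
          * (1/(m:ℝ)) ^ (2 * T.card) ≤ gg T.card := by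
      intro T
      by_cases ht0 : T.card = 0
      · have hzero : Fintype.card {a : {x // x ∈ T} → Fin m × Fin m // isMOG T a} = 0 := by
          rw [Fintype.card_eq_zero_iff]
          exact ⟨fun p => absurd (mog_card_pos p.2) (by omega)⟩
        rw [hzero, hgg]
        simp [ht0]
      · rw [hgg]
        simp only [if_neg ht0]
        refine mul_le_mul_of_nonneg_right ?_ (by positivity)
        have := card_mog_le (m := m) T
        calc (Fintype.card {a : {x // x ∈ T} → Fin m × Fin m // isMOG T a} : ℝ)
            ≤ ((2 * (T.card).factorial * (T.card + 1) ^ 4 * m ^ (T.card - 1) : ℕ) : ℝ) := by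
              exact_mod_cast this
          _ = 2 * (Nat.factorial T.card : ℝ) * ((T.card : ℝ) + 1) ^ 4 * (m:ℝ) ^ (T.card - 1) := by
              push_cast
              ring
    have hgt : ∀ t ∈ Finset.range (n + 1),
        (n.choose t : ℝ) * gg t ≤ 2 * ((t:ℝ) + 1) ^ 4 * x ^ t * (1/(m:ℝ)) := by
      intro t _
      by_cases ht0 : t = 0
      · subst ht0
        simp only [hgg, if_pos rfl, mul_zero]
        positivity
      · rw [hgg]
        simp only [if_neg ht0]
        have ht1 : 1 ≤ t := Nat.one_le_iff_ne_zero.2 ht0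
        have hsplit : (m:ℝ) ^ (t - 1) * (1/(m:ℝ)) ^ (2 * t) = (1/(m:ℝ)) ^ (t + 1) := by
          have hexp : 2 * t = (t - 1) + (t + 1) := by omega
          rw [hexp, pow_add, ← mul_assoc, ← mul_pow, mul_one_div_cancel (ne_of_gt hm0),
            one_pow, one_mul]
        have hcf : (n.choose t : ℝ) * (Nat.factorial t : ℝ) ≤ (n:ℝ) ^ t := by
          have h1 : n.choose t * Nat.factorial t ≤ n ^ t := by
            rw [mul_comm, ← Nat.descFactorial_eq_factorial_mul_choose]
            exact Nat.descFactorial_le_pow n t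
          exact_mod_cast h1
        have hnm : (n:ℝ) * (1/(m:ℝ)) ≤ x := by
          rw [mul_one_div, hx, div_le_div_iff₀ hm0 hε1]
          linarith [hm]
        calc (n.choose t : ℝ)
              * (2 * (Nat.factorial t : ℝ) * ((t:ℝ) + 1) ^ 4 * (m:ℝ) ^ (t - 1)
                * (1/(m:ℝ)) ^ (2 * t))
            = 2 * ((t:ℝ) + 1) ^ 4 * (((n.choose t : ℝ) * (Nat.factorial t : ℝ))
                * ((m:ℝ) ^ (t - 1) * (1/(m:ℝ)) ^ (2 * t))) := by ring
          _ = 2 * ((t:ℝ) + 1) ^ 4 * (((n.choose t : ℝ) * (Nat.factorial t : ℝ))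
                * (1/(m:ℝ)) ^ (t + 1)) := by rw [hsplit]
          _ ≤ 2 * ((t:ℝ) + 1) ^ 4 * ((n:ℝ) ^ t * (1/(m:ℝ)) ^ (t + 1)) := by
              refine mul_le_mul_of_nonneg_left
                (mul_le_mul_of_nonneg_right hcf (by positivity)) (by positivity)
          _ = 2 * ((t:ℝ) + 1) ^ 4 * (((n:ℝ) * (1/(m:ℝ))) ^ t * (1/(m:ℝ))) := by
              rw [mul_pow, pow_succ]
              ring
          _ ≤ 2 * ((t:ℝ) + 1) ^ 4 * (x ^ t * (1/(m:ℝ))) := by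
              refine mul_le_mul_of_nonneg_left
                (mul_le_mul_of_nonneg_right
                  (pow_le_pow_left₀ (by positivity) hnm t) (by positivity)) (by positivity)
          _ = 2 * ((t:ℝ) + 1) ^ 4 * x ^ t * (1/(m:ℝ)) := by ring
    calc ∑ T : Finset (Fin n),
          (Fintype.card {a : {x // x ∈ T} → Fin m × Fin m // isMOG T a} : ℝ)
            * (1/(m:ℝ)) ^ (2 * T.card)
        ≤ ∑ T : Finset (Fin n), gg T.card := Finset.sum_le_sum fun T _ => hT T
      _ = ∑ t ∈ Finset.range (n + 1), (n.choose t : ℝ) * gg t := by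
          rw [← Finset.powerset_univ, Finset.sum_powerset]
          rw [Finset.card_univ, Fintype.card_fin]
          refine Finset.sum_congr rfl fun t _ => ?_
          have hconst : ∀ T ∈ Finset.powersetCard t (Finset.univ : Finset (Fin n)),
              gg T.card = gg t := by
            intro T hT'
            rw [(Finset.mem_powersetCard.1 hT').2]
          rw [Finset.sum_congr rfl hconst, Finset.sum_const, Finset.card_powersetCard,
            Finset.card_univ, Fintype.card_fin, nsmul_eq_mul]
      _ ≤ ∑ t ∈ Finset.range (n + 1), 2 * ((t:ℝ) + 1) ^ 4 * x ^ t * (1/(m:ℝ)) :=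
          Finset.sum_le_sum hgt
      _ = (∑ t ∈ Finset.range (n + 1), ((t:ℝ) + 1) ^ 4 * x ^ t) * (2 * (1/(m:ℝ))) := by
          rw [Finset.sum_mul]
          refine Finset.sum_congr rfl fun t _ => ?_
          ring
      _ ≤ (∑' t : ℕ, ((t:ℝ) + 1) ^ 4 * x ^ t) * (2 * (1/(m:ℝ))) := by
          refine mul_le_mul_of_nonneg_right ?_ (by positivity)
          exact Summable.sum_le_tsum _ (fun i _ => by positivity) hsum
      _ = 2 * (∑' t : ℕ, ((t:ℝ) + 1) ^ 4 * x ^ t) / (m:ℝ) := by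
          field_simp
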